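/- Let p be a prime and f ≥ 1. Let r_0,…,r_{f-1} be integers with 1 ≤ r_i ≤ p, let J ⊆ {0,…,f−1}, and set h_i = r_i if i ∈ J and h_i = 0 otherwise. Then ∑_{i=0}^{f-1} p^{f-1-i} h_i ≡ ∑_{i=0}^{f-1} p^{f-1-i} (r_i − h_i) (mod p^f − 1) holds if and only if one of the following holds: (a) every r_i lies in {1, p−1, p}, the tuple satisfies the 𝒫-conditions (if r_i = p then r_{i+1} = 1; if r_i ∈ {1, p−1} then r_{i+1} ∈ {p−1, p}, indices mod f), and J satisfies: if (r_{i−1}, r_i) = (p,1) then (i+1 ∈ J ⟺ i ∉ J), and if (r_{i−1}, r_i) = (1, p−1) or (p−1, p−1) then (i+1 ∈ J ⟺ i ∈ J); or (b) p = 2, (r_0,…,r_{f-1}) = (2,…,2), and J = ∅ or J = {0,…,f−1}. -/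

import Mathlib

section helpers
variable {p f : ℕ} [NeZero f]

private lemma tele_aux (b t : ZMod f → ℤ)
    (ht : ∀ i, b i = (p:ℤ) * t (i - 1) - t i) (k : ℕ) :
    ∑ i ∈ Finset.range k, (p:ℤ)^(k-1-i) * b (i : ZMod f)
      = (p:ℤ)^k * t (-1) - t ((k : ZMod f) - 1) := by
  induction k with
  | zero => simp
  | succ n ih =>
    rw [Finset.sum_range_succ]
    have h1 : ∀ i ∈ Finset.range n, (p:ℤ)^(n+1-1-i) * b (i : ZMod f)
        = (p:ℤ) * ((p:ℤ)^(n-1-i) * b (i : ZMod f)) := by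
      intro i hi
      rw [Finset.mem_range] at hi
      rw [← mul_assoc, ← pow_succ']
      congr 2
      omega
    rw [Finset.sum_congr rfl h1, ← Finset.mul_sum, ih, ht ((n:ZMod f))]
    have h2 : ((n+1 : ℕ) : ZMod f) - 1 = (n : ZMod f) := by push_cast; ring
    have h3 : n + 1 - 1 - n = 0 := by omega
    rw [h2, h3]
    ring

private lemma telescope (b t : ZMod f → ℤ)
    (ht : ∀ i, b i = (p:ℤ) * t (i - 1) - t i) :
    ∑ i ∈ Finset.range f, (p:ℤ)^(f-1-i) * b (i : ZMod f) = ((p:ℤ)^f - 1) * t (-1) := by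
  rw [tele_aux b t ht f, ZMod.natCast_self]
  ring

private lemma exists_t (b : ZMod f → ℤ)
    (hd : ((p:ℤ)^f - 1) ∣ ∑ i ∈ Finset.range f, (p:ℤ)^(f-1-i) * b (i : ZMod f)) :
    ∃ t : ZMod f → ℤ, ∀ i, b i = (p:ℤ) * t (i - 1) - t i := by
  obtain ⟨m, hm⟩ := hd
  set t' : ℕ → ℤ := fun k => Nat.rec m (fun n acc => (p:ℤ) * acc - b (n : ZMod f)) k with ht'
  have hstep : ∀ k, t' (k+1) = (p:ℤ) * t' k - b (k : ZMod f) := fun k => rfl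
  have hval : ∀ k, t' k = (p:ℤ)^k * m - ∑ i ∈ Finset.range k, (p:ℤ)^(k-1-i) * b (i : ZMod f) := by
    intro k
    induction k with
    | zero => simp [ht']
    | succ n ih =>
      rw [hstep, ih, Finset.sum_range_succ]
      have h1 : ∀ i ∈ Finset.range n, (p:ℤ)^(n+1-1-i) * b (i : ZMod f)
          = (p:ℤ) * ((p:ℤ)^(n-1-i) * b (i : ZMod f)) := by
        intro i hi
        rw [Finset.mem_range] at hi
        rw [← mul_assoc, ← pow_succ']
        congr 2
        omega
      rw [Finset.sum_congr rfl h1, ← Finset.mul_sum]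
      have h3 : n + 1 - 1 - n = 0 := by omega
      rw [h3]
      ring
  have hff : t' f = m := by
    rw [hval, hm]; ring
  have hf1 : 1 ≤ f := Nat.one_le_iff_ne_zero.mpr (NeZero.ne f)
  refine ⟨fun i => t' (i.val + 1), fun i => ?_⟩
  have key : t' ((i-1).val + 1) = t' i.val := by
    rcases Nat.eq_zero_or_pos i.val with h0 | h0
    · have hi0 : i = 0 := by rwa [ZMod.val_eq_zero] at h0
      have : i - 1 = -1 := by rw [hi0]; ring
      rw [this, h0]
      have hv : (-1 : ZMod f).val = f - 1 := by
        obtain ⟨n, rfl⟩ := Nat.exists_eq_succ_of_ne_zero (NeZero.ne f)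
        simp [ZMod.val_neg_one]
      rw [hv]
      have : f - 1 + 1 = f := by omega
      rw [this, hff]
      rfl
    · have hlt : i.val - 1 < f := by have := ZMod.val_lt i; omega
      have heq : i - 1 = ((i.val - 1 : ℕ) : ZMod f) := by
        have h1 : ((i.val : ℕ) : ZMod f) = i := ZMod.natCast_zmod_val i
        conv_lhs => rw [← h1]
        rw [show (1 : ZMod f) = ((1:ℕ):ZMod f) by norm_num, ← Nat.cast_sub h0]
      rw [heq, ZMod.val_natCast_of_lt hlt]
      have h2 : i.val - 1 + 1 = i.val := by omega
      rw [h2]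
  show b i = (p:ℤ) * t' ((i-1).val + 1) - t' (i.val + 1)
  rw [key, hstep, ZMod.natCast_zmod_val]
  ring

section helpers
variable {p f : ℕ} [NeZero f]

private lemma bound_t (hp2 : 2 ≤ p) (b t : ZMod f → ℤ)
    (ht : ∀ i, b i = (p:ℤ) * t (i - 1) - t i)
    (hb : ∀ i, |b i| ≤ (p:ℤ)) :
    ∀ i, ((p:ℤ) - 1) * |t i| ≤ p := by
  obtain ⟨j, hj⟩ := Finite.exists_max (fun i => |t i|)
  have h1 := ht (j + 1)
  rw [add_sub_cancel_right] at h1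
  have h2 : (p:ℤ) * t j = b (j+1) + t (j+1) := by linarith
  have h3 : (p:ℤ) * |t j| = |b (j+1) + t (j+1)| := by
    rw [← h2, abs_mul, abs_of_nonneg (by positivity : (0:ℤ) ≤ (p:ℤ))]
  have h4 : |b (j+1) + t (j+1)| ≤ (p:ℤ) + |t j| := by
    calc |b (j+1) + t (j+1)| ≤ |b (j+1)| + |t (j+1)| := abs_add_le _ _
    _ ≤ (p:ℤ) + |t j| := by
        have := hb (j+1); have := hj (j+1); linarith
  have h6 : ((p:ℤ) - 1) * |t j| ≤ p := by nlinarith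
  intro i
  have h7 : |t i| ≤ |t j| := hj i
  have hp1 : (1:ℤ) ≤ (p:ℤ) := by exact_mod_cast Nat.one_le_of_lt hp2
  nlinarith [abs_nonneg (t i)]

end helpers

end helpers

set_option maxHeartbeats 2000000 in
theorem stmt1 (p f : ℕ) (hp : p.Prime) [NeZero f]
    (r : ZMod f → ℕ) (hr1 : ∀ i, 1 ≤ r i) (hr2 : ∀ i, r i ≤ p)
    (J : Finset (ZMod f))
    (h : ZMod f → ℕ) (hh : ∀ i, h i = if i ∈ J then r i else 0) :
    (((p : ℤ) ^ f - 1) ∣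
        ((∑ i : Fin f, (p : ℤ) ^ (f - 1 - i.val) * (h ((i.val : ZMod f)) : ℤ)) -
          ∑ i : Fin f, (p : ℤ) ^ (f - 1 - i.val) *
            ((r ((i.val : ZMod f)) : ℤ) - (h ((i.val : ZMod f)) : ℤ)))) ↔
    (((∀ i : ZMod f, r i = 1 ∨ r i = p - 1 ∨ r i = p) ∧
      (∀ i : ZMod f, r i = p → r (i + 1) = 1) ∧
      (∀ i : ZMod f, (r i = 1 ∨ r i = p - 1) → (r (i + 1) = p - 1 ∨ r (i + 1) = p)) ∧
      (∀ i : ZMod f, (r (i - 1) = p ∧ r i = 1) → ((i + 1) ∈ J ↔ i ∉ J)) ∧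
      (∀ i : ZMod f, ((r (i - 1) = 1 ∧ r i = p - 1) ∨ (r (i - 1) = p - 1 ∧ r i = p - 1)) →
        ((i + 1) ∈ J ↔ i ∈ J))) ∨
     (p = 2 ∧ (∀ i, r i = 2) ∧ (J = ∅ ∨ J = Finset.univ))) := by
  have hp2 : 2 ≤ p := hp.two_le
  set b : ZMod f → ℤ := fun i => if i ∈ J then (r i : ℤ) else -(r i : ℤ) with hbdef
  have hbval : ∀ i, b i = (r i : ℤ) ∨ b i = -(r i : ℤ) := by
    intro i
    by_cases hm : i ∈ J
    · left; simp only [hbdef, if_pos hm]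
    · right; simp only [hbdef, if_neg hm]
  have hJb : ∀ i, i ∈ J ↔ 0 < b i := by
    intro i
    have h1 := hr1 i
    by_cases hm : i ∈ J
    · simp only [hbdef, if_pos hm, hm, true_iff]
      exact_mod_cast h1
    · simp only [hbdef, if_neg hm, hm, false_iff, not_lt]
      omega
  have hLHS : ((∑ i : Fin f, (p : ℤ) ^ (f - 1 - i.val) * (h ((i.val : ZMod f)) : ℤ)) -
          ∑ i : Fin f, (p : ℤ) ^ (f - 1 - i.val) *
            ((r ((i.val : ZMod f)) : ℤ) - (h ((i.val : ZMod f)) : ℤ)))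
      = ∑ i ∈ Finset.range f, (p:ℤ)^(f-1-i) * b (i : ZMod f) := by
    rw [← Finset.sum_sub_distrib,
      ← Fin.sum_univ_eq_sum_range (fun k => (p:ℤ)^(f-1-k) * b ((k : ℕ) : ZMod f)) f]
    refine Finset.sum_congr rfl fun i _ => ?_
    have hhi := hh ((i.val : ZMod f))
    by_cases hm : ((i.val : ZMod f)) ∈ J
    · rw [if_pos hm] at hhi
      rw [hhi]
      simp only [hbdef, if_pos hm]
      push_cast
      ring
    · rw [if_neg hm] at hhi
      rw [hhi]
      simp only [hbdef, if_neg hm]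
      push_cast
      ring
  rw [hLHS]
  constructor
  · -- forward
    intro hdvd
    obtain ⟨t, ht⟩ := exists_t b hdvd
    have hb_abs : ∀ i, |b i| ≤ (p:ℤ) := by
      intro i; rw [abs_le]; rcases hbval i with v | v <;>
        (have := hr1 i; have := hr2 i; omega)
    have hbnd := bound_t hp2 b t ht hb_abs
    by_cases hall : ∀ i, t i = -1 ∨ t i = 0 ∨ t i = 1
    · left
      refine ⟨?_, ?_, ?_, ?_, ?_⟩
      · intro i
        have e1 := ht i
        have v1 := hbval i
        have l1 := hr1 i; have l2 := hr2 i
        rcases hall (i-1) with h1|h1|h1 <;> rcases hall i with h2|h2|h2 <;>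
          rw [h1, h2] at e1 <;> rcases v1 with v|v <;> omega
      · intro i hri
        have e1 := ht i
        have e2 := ht (i+1); rw [add_sub_cancel_right] at e2
        have v1 := hbval i; have v2 := hbval (i+1)
        have l1 := hr1 (i+1); have l2 := hr2 (i+1)
        rcases hall (i-1) with h1|h1|h1 <;> rcases hall i with h2|h2|h2 <;>
          rcases hall (i+1) with h3|h3|h3 <;>
          rw [h1, h2] at e1 <;> rw [h2, h3] at e2 <;>
          rcases v1 with v|v <;> rcases v2 with w|w <;> omega
      · intro i hri
        have e1 := ht i
        have e2 := ht (i+1); rw [add_sub_cancel_right] at e2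
        have v1 := hbval i; have v2 := hbval (i+1)
        have l1 := hr1 (i+1); have l2 := hr2 (i+1)
        have l3 := hr1 i; have l4 := hr2 i
        rcases hall (i-1) with h1|h1|h1 <;> rcases hall i with h2|h2|h2 <;>
          rcases hall (i+1) with h3|h3|h3 <;>
          rw [h1, h2] at e1 <;> rw [h2, h3] at e2 <;>
          rcases v1 with v|v <;> rcases v2 with w|w <;> rcases hri with q|q <;> omega
      · rintro i ⟨ha, hb'⟩
        have e0 := ht (i-1)
        have e1 := ht i
        have e2 := ht (i+1); rw [add_sub_cancel_right] at e2
        have v0 := hbval (i-1); have v1 := hbval i; have v2 := hbval (i+1)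
        have l1 := hr1 (i+1); have l2 := hr2 (i+1)
        rw [hJb (i+1), hJb i]
        rcases hall (i-1-1) with h0|h0|h0 <;> rcases hall (i-1) with h1|h1|h1 <;>
          rcases hall i with h2|h2|h2 <;> rcases hall (i+1) with h3|h3|h3 <;>
          rw [h0, h1] at e0 <;> rw [h1, h2] at e1 <;> rw [h2, h3] at e2 <;>
          rcases v0 with u|u <;> rcases v1 with v|v <;> rcases v2 with w|w <;> omega
      · rintro i hcase
        have e0 := ht (i-1)
        have e1 := ht i
        have e2 := ht (i+1); rw [add_sub_cancel_right] at e2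
        have v0 := hbval (i-1); have v1 := hbval i; have v2 := hbval (i+1)
        have l1 := hr1 (i+1); have l2 := hr2 (i+1)
        have l3 := hr1 (i-1); have l4 := hr2 (i-1)
        rw [hJb (i+1), hJb i]
        rcases hcase with ⟨q1,q2⟩|⟨q1,q2⟩ <;>
          rcases hall (i-1-1) with h0|h0|h0 <;> rcases hall (i-1) with h1|h1|h1 <;>
          rcases hall i with h2|h2|h2 <;> rcases hall (i+1) with h3|h3|h3 <;>
          rw [h0, h1] at e0 <;> rw [h1, h2] at e1 <;> rw [h2, h3] at e2 <;>
          rcases v0 with u|u <;> rcases v1 with v|v <;> rcases v2 with w|w <;> omega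
    · -- extreme case: p = 2
      right
      push_neg at hall
      obtain ⟨j, hj1, hj2, hj3⟩ := hall
      have habs := abs_choice (t j)
      have hnn := abs_nonneg (t j)
      have hX2 : 2 ≤ |t j| := by omega
      have hpz : (p:ℤ) ≤ 2 := by
        have h1 := hbnd j
        have h3 : (2:ℤ) ≤ (p:ℤ) := by exact_mod_cast hp2
        nlinarith [mul_nonneg (by linarith : (0:ℤ) ≤ |t j| - 2)
          (by linarith : (0:ℤ) ≤ (p:ℤ) - 1)]
      have hpn : p = 2 := by
        have : (p:ℤ) = 2 := by
          have h3 : (2:ℤ) ≤ (p:ℤ) := by exact_mod_cast hp2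
          linarith
        exact_mod_cast this
      subst hpn
      have htb2 : ∀ i, |t i| ≤ 2 := by
        intro i; have := hbnd i; push_cast at this; linarith
      have hjv : t j = 2 ∨ t j = -2 := by have := htb2 j; omega
      have habs2 : ∀ i, -2 ≤ b i ∧ b i ≤ 2 := by
        intro i; have := hb_abs i; rw [abs_le] at this; push_cast at this; omega
      have habs3 : ∀ i, -2 ≤ t i ∧ t i ≤ 2 := by
        intro i; have := htb2 i; rw [abs_le] at this; omega
      have main : (∀ i, t i = 2) ∨ (∀ i, t i = -2) := by
        rcases hjv with hjv | hjv
        · left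
          have key : ∀ k : ℕ, t (j + (k : ZMod f)) = 2 := by
            intro k
            induction k with
            | zero => simpa using hjv
            | succ n ih =>
              have e := ht (j + (n : ZMod f) + 1)
              rw [add_sub_cancel_right] at e
              have hcast : j + ((n+1 : ℕ) : ZMod f) = j + (n : ZMod f) + 1 := by
                push_cast; ring
              rw [hcast]
              have h1 := habs2 (j + (n : ZMod f) + 1)
              have h2 := habs3 (j + (n : ZMod f) + 1)
              rw [ih] at e
              push_cast at e
              omega
          intro i
          have := key ((i - j).val)
          rwa [ZMod.natCast_zmod_val, show j + (i - j) = i from by ring] at this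
        · right
          have key : ∀ k : ℕ, t (j + (k : ZMod f)) = -2 := by
            intro k
            induction k with
            | zero => simpa using hjv
            | succ n ih =>
              have e := ht (j + (n : ZMod f) + 1)
              rw [add_sub_cancel_right] at e
              have hcast : j + ((n+1 : ℕ) : ZMod f) = j + (n : ZMod f) + 1 := by
                push_cast; ring
              rw [hcast]
              have h1 := habs2 (j + (n : ZMod f) + 1)
              have h2 := habs3 (j + (n : ZMod f) + 1)
              rw [ih] at e
              push_cast at e
              omega
          intro i
          have := key ((i - j).val)
          rwa [ZMod.natCast_zmod_val, show j + (i - j) = i from by ring] at this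
      rcases main with hall2 | hall2
      · have hball : ∀ i, b i = 2 := by
          intro i
          have e := ht i
          rw [hall2 (i-1), hall2 i] at e
          push_cast at e
          omega
        refine ⟨rfl, fun i => ?_, Or.inr ?_⟩
        · have := hball i; have := hbval i; have := hr2 i; omega
        · apply Finset.eq_univ_iff_forall.mpr
          intro i
          rw [hJb i, hball i]
          norm_num
      · have hball : ∀ i, b i = -2 := by
          intro i
          have e := ht i
          rw [hall2 (i-1), hall2 i] at e
          push_cast at e
          omega
        refine ⟨rfl, fun i => ?_, Or.inl ?_⟩
        · have := hball i; have := hbval i; have := hr2 i; omega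
        · apply Finset.eq_empty_iff_forall_notMem.mpr
          intro i
          rw [hJb i, hball i]
          norm_num
  · -- backward
    rintro (⟨c1, c2, c3, c4, c5⟩ | ⟨hpn, hr2', hJ⟩)
    · set t : ZMod f → ℤ := fun i =>
        if r (i+1) = p then (if (i+1) ∈ J then 1 else -1)
        else if r i = p then 0 else (if (i+1) ∈ J then 1 else -1) with htdef
      have ht : ∀ i, b i = (p:ℤ) * t (i - 1) - t i := by
        intro i
        have esub : i - 1 + 1 = i := sub_add_cancel i 1
        have ht1 : t (i - 1) = if r i = p then (if i ∈ J then (1:ℤ) else -1)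
            else if r (i-1) = p then 0 else (if i ∈ J then 1 else -1) := by
          simp only [htdef, esub]
        have ht2 : t i = if r (i+1) = p then (if (i+1) ∈ J then (1:ℤ) else -1)
            else if r i = p then 0 else (if (i+1) ∈ J then 1 else -1) := by
          simp only [htdef]
        by_cases h1 : r i = p
        · have hnext := c2 i h1
          have hne : r (i+1) ≠ p := by omega
          rw [ht1, if_pos h1, ht2, if_neg hne, if_pos h1]
          by_cases hm : i ∈ J
          · rw [if_pos hm]
            simp only [hbdef, if_pos hm, h1]
            ring
          · rw [if_neg hm]
            simp only [hbdef, if_neg hm, h1]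
            ring
        · have ht2' : t i = if (i+1) ∈ J then (1:ℤ) else -1 := by
            rw [ht2]
            by_cases h5 : r (i+1) = p
            · rw [if_pos h5]
            · rw [if_neg h5, if_neg h1]
          by_cases h2 : r (i-1) = p
          · have hri : r i = 1 := by have := c2 (i-1) h2; rwa [esub] at this
            have hc4 := c4 i ⟨h2, hri⟩
            rw [ht1, if_neg h1, if_pos h2, ht2']
            by_cases hm : i ∈ J
            · have hm1 : (i+1) ∉ J := by tauto
              rw [if_neg hm1]
              simp only [hbdef, if_pos hm, hri]
              push_cast
              ring
            · have hm1 : (i+1) ∈ J := by tauto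
              rw [if_pos hm1]
              simp only [hbdef, if_neg hm, hri]
              push_cast
              ring
          · have h3 := c1 (i-1)
            have h4 : r i = p - 1 := by
              have := c3 (i-1) (by omega)
              rw [esub] at this
              omega
            have hc5 := c5 i (by omega)
            rw [ht1, if_neg h1, if_neg h2, ht2']
            by_cases hm : i ∈ J
            · have hm1 : (i+1) ∈ J := by tauto
              rw [if_pos hm, if_pos hm1]
              simp only [hbdef, if_pos hm, h4]
              rw [Nat.cast_sub (by omega : 1 ≤ p)]
              push_cast
              ring
            · have hm1 : (i+1) ∉ J := by tauto
              rw [if_neg hm, if_neg hm1]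
              simp only [hbdef, if_neg hm, h4]
              rw [Nat.cast_sub (by omega : 1 ≤ p)]
              push_cast
              ring
      exact ⟨t (-1), telescope b t ht⟩
    · subst hpn
      rcases hJ with hJ | hJ <;> subst hJ
      · have ht : ∀ i : ZMod f, b i = ((2:ℕ):ℤ) * (fun _ : ZMod f => (-2:ℤ)) (i - 1)
            - (fun _ : ZMod f => (-2:ℤ)) i := by
          intro i
          simp only [hbdef, Finset.notMem_empty, if_false, hr2' i]
          norm_num
        exact ⟨-2, by simpa using telescope b (fun _ => (-2:ℤ)) ht⟩
      · have ht : ∀ i : ZMod f, b i = ((2:ℕ):ℤ) * (fun _ : ZMod f => (2:ℤ)) (i - 1)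
            - (fun _ : ZMod f => (2:ℤ)) i := by
          intro i
          simp only [hbdef, Finset.mem_univ, if_true, hr2' i]
          norm_num
        exact ⟨2, by simpa using telescope b (fun _ => (2:ℤ)) ht⟩
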